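/- Let i ≥ 1 and p, q ∈ ℤ. Then ∂_i(c^{-i}_p · c^i_q) = c^{-i+1}_{p-1} · c^{i+1}_q + c^{-i+1}_p · c^{i+1}_{q-1}. -/

import Mathlib

/-!
The polynomial ring `R2 = ℚ[c₁, c₂, …, t₁, t₂, …]`: the variable `Sum.inl p` (for `p ≥ 1`)
is `c_p`, and `Sum.inr i` (for `i ≥ 1`) is `t_i`.
-/

noncomputable section
open MvPolynomial Finset
open scoped Classical

abbrev R2 : Type := MvPolynomial (ℕ ⊕ ℕ) ℚ

/-- The variable `t_i`. -/
def Tv (i : ℕ) : R2 := X (Sum.inr i)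

/-- `c_p`, with the conventions `c_0 = 1` and `c_p = 0` for `p < 0`. -/
def Cv (p : ℤ) : R2 := if p < 0 then 0 else if p = 0 then 1 else X (Sum.inl p.toNat)

/-- The complete homogeneous symmetric polynomial `h_j` evaluated on a list. -/
def hfun : List R2 → ℕ → R2
  | [], j => if j = 0 then 1 else 0
  | a :: L, j => ∑ i ∈ Finset.range (j + 1), a ^ i * hfun L (j - i)

/-- The elementary symmetric polynomial `e_j` evaluated on a list. -/
def efun : List R2 → ℕ → R2
  | [], j => if j = 0 then 1 else 0
  | _ :: _, 0 => 1
  | a :: L, j + 1 => efun L (j + 1) + a * efun L j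

/-- The list `(-t_1, …, -t_r)`. -/
def negT (r : ℕ) : List R2 := (List.range r).map fun i => -Tv (i + 1)

/-- `h^r_j(-t)`: complete homogeneous for `r ≥ 0`, elementary `e^{-r}_j(-t)` for `r < 0`. -/
def hmt (r : ℤ) (j : ℕ) : R2 :=
  if 0 ≤ r then hfun (negT r.toNat) j else efun (negT (-r).toNat) j

/-- `c^r_p := Σ_{j=0}^p c_{p-j} h^r_j(-t)`. -/
def cc (r p : ℤ) : R2 := ∑ j ∈ Finset.range (p.toNat + 1), Cv (p - j) * hmt r j

/-- `a^s_p := (1/2)c_p + Σ_{j=1}^p c_{p-j} h^s_j(-t)`. -/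
def aa (s p : ℤ) : R2 :=
  C (1/2 : ℚ) * Cv p + ∑ j ∈ Finset.Icc 1 p.toNat, Cv (p - j) * hmt s j

/-- Images of the variables under the automorphism `s_i`. -/
def sImg : ℕ → ℕ ⊕ ℕ → R2
  | 0, Sum.inr j => if j = 1 then -Tv 2 else if j = 2 then -Tv 1 else Tv j
  | 0, Sum.inl p =>
      if p = 0 then X (Sum.inl 0)
      else Cv p - 2 * (Tv 1 + Tv 2) *
        ∑ j ∈ Finset.range p, (-1 : R2) ^ j *
          (∑ a ∈ Finset.range (j + 1), Tv 1 ^ a * Tv 2 ^ (j - a)) * Cv ((p : ℤ) - 1 - j)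
  | i + 1, Sum.inr j =>
      if j = i + 1 then Tv (i + 2) else if j = i + 2 then Tv (i + 1) else Tv j
  | _ + 1, Sum.inl p => X (Sum.inl p)

/-- The ring automorphism `s_i` of `R2`. -/
def sA (i : ℕ) : R2 →ₐ[ℚ] R2 := aeval (sImg i)

/-- The fraction field of `R2`. -/
abbrev KK : Type := FractionRing R2

/-- The canonical embedding of `R2` into its fraction field. -/
def toK : R2 →+* KK := algebraMap R2 KK

/-- The denominator `t_1 + t_2` (for `i = 0`) resp. `t_{i+1} - t_i` (for `i ≥ 1`). -/
def dden (i : ℕ) : R2 := if i = 0 then Tv 1 + Tv 2 else Tv (i + 1) - Tv i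

/-- The divided difference operator `∂_i`, with values in the fraction field. -/
def dd (i : ℕ) (f : R2) : KK := (toK f - toK (sA i f)) / toK (dden i)

lemma hfun_zero (L : List R2) : hfun L 0 = 1 := by
  induction L with
  | nil => simp [hfun]
  | cons a L ih => simp [hfun, ih]

lemma efun_zero (L : List R2) : efun L 0 = 1 := by
  cases L <;> simp [efun]

lemma hfun_cons_succ (a : R2) (L : List R2) (j : ℕ) :
    hfun (a :: L) (j + 1) = hfun L (j + 1) + a * hfun (a :: L) j := by
  show (∑ i ∈ Finset.range (j + 1 + 1), a ^ i * hfun L (j + 1 - i)) = _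
  rw [Finset.sum_range_succ']
  simp only [pow_zero, one_mul, Nat.sub_zero]
  rw [add_comm]
  congr 1
  show _ = a * ∑ i ∈ Finset.range (j + 1), a ^ i * hfun L (j - i)
  rw [Finset.mul_sum]
  refine Finset.sum_congr rfl fun i hi => ?_
  have : j + 1 - (i + 1) = j - i := by omega
  rw [this, pow_succ]
  ring

lemma efun_append (a : R2) (L : List R2) (j : ℕ) :
    efun (L ++ [a]) (j + 1) = efun L (j + 1) + a * efun L j := by
  induction L generalizing j with
  | nil => simp [efun]
  | cons b L ih =>
    show efun (b :: (L ++ [a])) (j+1) = _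
    cases j with
    | zero =>
      show efun (L ++ [a]) 1 + b * efun (L ++ [a]) 0 = efun L 1 + b * efun L 0 + a * 1
      rw [ih 0, efun_zero, efun_zero]; ring
    | succ j =>
      show efun (L ++ [a]) (j+2) + b * efun (L ++ [a]) (j+1) =
        (efun L (j+2) + b * efun L (j+1)) + a * (efun L (j+1) + b * efun L j)
      rw [ih (j+1), ih j]; ring

lemma hfun_sub (a b : R2) (L : List R2) (j : ℕ) :
    hfun (b :: L) (j + 1) - hfun (a :: L) (j + 1) = (b - a) * hfun (a :: b :: L) j := by
  induction j with
  | zero =>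
    rw [hfun_cons_succ, hfun_cons_succ, hfun_zero, hfun_zero, hfun_zero]; ring
  | succ j ih =>
    rw [hfun_cons_succ b L (j+1), hfun_cons_succ a L (j+1),
      hfun_cons_succ a (b :: L) j]
    linear_combination a * ih

lemma hfun_swap (a b : R2) (L : List R2) (j : ℕ) :
    hfun (a :: b :: L) j = hfun (b :: a :: L) j := by
  induction j with
  | zero => rw [hfun_zero, hfun_zero]
  | succ j ih =>
    rw [hfun_cons_succ a (b :: L) j, hfun_cons_succ b (a :: L) j, ih]
    linear_combination hfun_sub a b L j + (b - a) * ih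

lemma hfun_append (a : R2) (L : List R2) (j : ℕ) :
    hfun (L ++ [a]) j = hfun (a :: L) j := by
  induction L generalizing j with
  | nil => rfl
  | cons b L ih =>
    show hfun (b :: (L ++ [a])) j = _
    cases j with
    | zero => rw [hfun_zero, hfun_zero]
    | succ j =>
      show (∑ i ∈ Finset.range (j+1+1), b ^ i * hfun (L ++ [a]) (j+1-i)) = _
      have e : (∑ i ∈ Finset.range (j+1+1), b ^ i * hfun (L ++ [a]) (j+1-i))
          = ∑ i ∈ Finset.range (j+1+1), b ^ i * hfun (a :: L) (j+1-i) :=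
        Finset.sum_congr rfl fun i _ => by rw [ih]
      rw [e]
      show hfun (b :: a :: L) (j+1) = hfun (a :: b :: L) (j+1)
      rw [hfun_swap]

lemma negT_succ (r : ℕ) : negT (r + 1) = negT r ++ [-Tv (r + 1)] := by
  simp [negT, List.range_succ]

lemma hmt_zero (r : ℤ) : hmt r 0 = 1 := by
  unfold hmt; split
  · exact hfun_zero _
  · exact efun_zero _

lemma Cv_neg {p : ℤ} (h : p < 0) : Cv p = 0 := by simp [Cv, h]

lemma cc_of_rec {r' r : ℤ} {x : R2}
    (h : ∀ j : ℕ, hmt r' (j + 1) = hmt r (j + 1) + x * hmt r j) (p : ℤ) :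
    cc r' p = cc r p + x * cc r (p - 1) := by
  by_cases hp : p ≤ 0
  · have hP : p.toNat = 0 := by omega
    have hp1 : p - 1 < 0 := by omega
    simp only [cc, hP, Finset.range_one, Finset.sum_singleton, Nat.cast_zero, sub_zero,
      hmt_zero]
    have : (p - 1).toNat = 0 := by omega
    rw [this, Finset.range_one]
    simp only [Finset.sum_singleton, Nat.cast_zero, sub_zero]
    rw [Cv_neg hp1, hmt_zero, hmt_zero]
    ring
  · push_neg at hp
    have hP : p.toNat = (p - 1).toNat + 1 := by omega
    simp only [cc, hP]
    rw [Finset.sum_range_succ' (fun j => Cv (p - j) * hmt r' j),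
      Finset.sum_range_succ' (fun j => Cv (p - j) * hmt r j)]
    simp only [h, Nat.cast_zero, sub_zero, hmt_zero, mul_one]
    rw [Finset.mul_sum]
    have e : ∀ j ∈ Finset.range ((p-1).toNat + 1),
        Cv (p - (j + 1 : ℕ)) * (hmt r (j + 1) + x * hmt r j)
        = Cv (p - (j+1:ℕ)) * hmt r (j+1) + x * (Cv (p - 1 - j) * hmt r j) := by
      intro j _
      have : p - (j + 1 : ℕ) = p - 1 - j := by push_cast; ring
      rw [this]; ring
    rw [Finset.sum_congr rfl e, Finset.sum_add_distrib]
    have e2 : ∀ j ∈ Finset.range ((p-1).toNat + 1),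
        Cv (p - (j + 1 : ℕ)) * hmt r (j+1) = Cv (p - (j+1:ℕ)) * hmt r (j+1) := fun _ _ => rfl
    ring

lemma hmt_neg (i : ℕ) (j : ℕ) : hmt (-(i : ℤ)) j = efun (negT i) j := by
  cases i with
  | zero =>
    show hmt 0 j = efun (negT 0) j
    unfold hmt
    rw [if_pos le_rfl]
    show hfun [] j = efun [] j
    cases j <;> rfl
  | succ i =>
    unfold hmt
    rw [if_neg (by omega)]
    norm_num

lemma hmt_pos (i : ℕ) (j : ℕ) : hmt (i : ℤ) j = hfun (negT i) j := by
  unfold hmt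
  rw [if_pos (by positivity)]
  norm_num

lemma hmt_rec_neg (i : ℕ) (j : ℕ) :
    hmt (-(i : ℤ) - 1) (j + 1) = hmt (-(i : ℤ)) (j + 1) + (-Tv (i + 1)) * hmt (-(i : ℤ)) j := by
  have : -(i : ℤ) - 1 = -((i + 1 : ℕ) : ℤ) := by push_cast; ring
  rw [this, hmt_neg, hmt_neg, hmt_neg, negT_succ, efun_append]

lemma hmt_rec_pos (i : ℕ) (j : ℕ) :
    hmt (i : ℤ) (j + 1) = hmt ((i : ℤ) + 1) (j + 1) + Tv (i + 1) * hmt ((i : ℤ) + 1) j := by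
  have h1 : (i : ℤ) + 1 = ((i + 1 : ℕ) : ℤ) := by push_cast; ring
  rw [h1, hmt_pos, hmt_pos, hmt_pos, negT_succ, hfun_append, hfun_append]
  have := hfun_cons_succ (-Tv (i + 1)) (negT i) j
  linear_combination -this

lemma cc_rec_neg (i : ℕ) (p : ℤ) :
    cc (-(i : ℤ) - 1) p = cc (-(i : ℤ)) p - Tv (i + 1) * cc (-(i : ℤ)) (p - 1) := by
  have := cc_of_rec (hmt_rec_neg i) p
  linear_combination this

lemma cc_rec_pos (i : ℕ) (q : ℤ) :
    cc (i : ℤ) q = cc ((i : ℤ) + 1) q + Tv (i + 1) * cc ((i : ℤ) + 1) (q - 1) :=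
  cc_of_rec (hmt_rec_pos i) q

lemma sA_Tv (m k : ℕ) : sA (m + 1) (Tv k) =
    if k = m + 1 then Tv (m + 2) else if k = m + 2 then Tv (m + 1) else Tv k := by
  simp only [sA, Tv, aeval_X, sImg]

lemma sA_Cv (m : ℕ) (p : ℤ) : sA (m + 1) (Cv p) = Cv p := by
  unfold Cv
  split_ifs
  · exact map_zero _
  · exact map_one _
  · simp [sA, aeval_X, sImg]

lemma hfun_map (φ : R2 →ₐ[ℚ] R2) (L : List R2) (j : ℕ) :
    φ (hfun L j) = hfun (L.map φ) j := by
  induction L generalizing j with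
  | nil =>
    show φ (if j = 0 then 1 else 0) = (if j = 0 then 1 else 0)
    split_ifs <;> simp
  | cons a L ih =>
    show φ (∑ i ∈ Finset.range (j+1), a ^ i * hfun L (j - i)) = _
    rw [map_sum]
    exact Finset.sum_congr rfl fun i _ => by rw [map_mul, map_pow, ih]

lemma efun_map (φ : R2 →ₐ[ℚ] R2) (L : List R2) (j : ℕ) :
    φ (efun L j) = efun (L.map φ) j := by
  induction L generalizing j with
  | nil =>
    show φ (if j = 0 then 1 else 0) = (if j = 0 then 1 else 0)
    split_ifs <;> simp
  | cons a L ih =>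
    cases j with
    | zero => simp [efun]
    | succ j =>
      show φ (efun L (j+1) + a * efun L j) = efun (L.map φ) (j+1) + φ a * efun (L.map φ) j
      rw [map_add, map_mul, ih, ih]

lemma negT_map_lt (m i : ℕ) (h : m ≤ i) : (negT m).map (sA (i + 1)) = negT m := by
  unfold negT
  rw [List.map_map]
  refine List.map_congr_left fun k hk => ?_
  rw [List.mem_range] at hk
  show sA (i + 1) (-Tv (k + 1)) = -Tv (k + 1)
  rw [map_neg, sA_Tv]
  rw [if_neg (by omega), if_neg (by omega)]

lemma sA_cc_neg (m : ℕ) (p : ℤ) : sA (m + 1) (cc (-(m : ℤ)) p) = cc (-(m : ℤ)) p := by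
  unfold cc
  rw [map_sum]
  refine Finset.sum_congr rfl fun j _ => ?_
  rw [map_mul, sA_Cv, hmt_neg, efun_map, negT_map_lt m m le_rfl]

lemma hfun_append2 (x y : R2) (M : List R2) (j : ℕ) :
    hfun (M ++ [x, y]) j = hfun (x :: y :: M) j := by
  have e : M ++ [x, y] = (M ++ [x]) ++ [y] := by simp
  rw [e, hfun_append]
  show (∑ i ∈ Finset.range (j+1), y ^ i * hfun (M ++ [x]) (j - i)) = _
  have e2 : (∑ i ∈ Finset.range (j+1), y ^ i * hfun (M ++ [x]) (j - i))
      = ∑ i ∈ Finset.range (j+1), y ^ i * hfun (x :: M) (j - i) :=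
    Finset.sum_congr rfl fun i _ => by rw [hfun_append]
  rw [e2]
  show hfun (y :: x :: M) j = hfun (x :: y :: M) j
  rw [hfun_swap]

lemma sA_cc_pos (m : ℕ) (q : ℤ) :
    sA (m + 1) (cc ((m : ℤ) + 2) q) = cc ((m : ℤ) + 2) q := by
  have hcast : (m : ℤ) + 2 = ((m + 2 : ℕ) : ℤ) := by push_cast; ring
  unfold cc
  rw [map_sum]
  refine Finset.sum_congr rfl fun j _ => ?_
  rw [map_mul, sA_Cv, hcast, hmt_pos, hfun_map]
  rw [negT_succ (m + 1), negT_succ m, List.map_append, List.map_append,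
    negT_map_lt m m le_rfl]
  have h1 : [-Tv (m + 1)].map (sA (m + 1)) = [-Tv (m + 2)] := by
    simp [sA_Tv]
  have h2 : [-Tv (m + 1 + 1)].map (sA (m + 1)) = [-Tv (m + 1)] := by
    simp [sA_Tv]
  rw [h1, h2]
  have e1 : negT m ++ [-Tv (m + 1)] ++ [-Tv (m + 2)] = negT m ++ [-Tv (m + 1), -Tv (m + 2)] := by
    simp
  have e2 : negT m ++ [-Tv (m + 2)] ++ [-Tv (m + 1)] = negT m ++ [-Tv (m + 2), -Tv (m + 1)] := by
    simp
  rw [e1, e2, hfun_append2, hfun_append2, hfun_swap]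


theorem statement6 (i : ℕ) (hi : 1 ≤ i) (p q : ℤ) :
    dd i (cc (-(i : ℤ)) p * cc (i : ℤ) q) =
      toK (cc (-(i : ℤ) + 1) (p - 1) * cc ((i : ℤ) + 1) q +
        cc (-(i : ℤ) + 1) p * cc ((i : ℤ) + 1) (q - 1)) := by
  obtain ⟨m, rfl⟩ : ∃ m, i = m + 1 := ⟨i - 1, by omega⟩
  have c1 : (-((m + 1 : ℕ) : ℤ)) = -(m : ℤ) - 1 := by push_cast; ring
  have c2 : (-((m + 1 : ℕ) : ℤ)) + 1 = -(m : ℤ) := by push_cast; ring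
  have c3 : (((m + 1 : ℕ) : ℤ)) + 1 = (m : ℤ) + 2 := by push_cast; ring
  have e1 : cc (-((m + 1 : ℕ) : ℤ)) p
      = cc (-(m : ℤ)) p - Tv (m + 1) * cc (-(m : ℤ)) (p - 1) := by
    rw [c1]; exact cc_rec_neg m p
  have e2 : cc (((m + 1 : ℕ) : ℤ)) q
      = cc ((m : ℤ) + 2) q + Tv (m + 2) * cc ((m : ℤ) + 2) (q - 1) := by
    have h := cc_rec_pos (m + 1) q
    rw [c3] at h
    exact h
  have hsT1 : sA (m + 1) (Tv (m + 1)) = Tv (m + 2) := by rw [sA_Tv]; simp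
  have hsT2 : sA (m + 1) (Tv (m + 2)) = Tv (m + 1) := by
    rw [sA_Tv, if_neg (by omega), if_pos rfl]
  have hsf : sA (m + 1) (cc (-((m + 1 : ℕ) : ℤ)) p * cc (((m + 1 : ℕ) : ℤ)) q)
      = (cc (-(m : ℤ)) p - Tv (m + 2) * cc (-(m : ℤ)) (p - 1)) *
        (cc ((m : ℤ) + 2) q + Tv (m + 1) * cc ((m : ℤ) + 2) (q - 1)) := by
    rw [map_mul, e1, e2, map_sub, map_add, map_mul, map_mul, hsT1, hsT2,
      sA_cc_neg m p, sA_cc_neg m (p - 1), sA_cc_pos m q, sA_cc_pos m (q - 1)]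
  have hden : dden (m + 1) = Tv (m + 2) - Tv (m + 1) := by
    unfold dden
    rw [if_neg (by omega)]
  have hdiff : cc (-((m + 1 : ℕ) : ℤ)) p * cc (((m + 1 : ℕ) : ℤ)) q
      - sA (m + 1) (cc (-((m + 1 : ℕ) : ℤ)) p * cc (((m + 1 : ℕ) : ℤ)) q)
      = dden (m + 1) * (cc (-(m : ℤ)) (p - 1) * cc ((m : ℤ) + 2) q
          + cc (-(m : ℤ)) p * cc ((m : ℤ) + 2) (q - 1)) := by
    rw [hsf, e1, e2, hden]; ring
  have hne : toK (dden (m + 1)) ≠ 0 := by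
    rw [hden]
    intro h
    have h2 : Tv (m + 2) - Tv (m + 1) = 0 :=
      IsFractionRing.injective R2 KK (by rw [map_zero]; exact h)
    have h3 : Tv (m + 2) = Tv (m + 1) := by linear_combination h2
    have := MvPolynomial.X_injective (R := ℚ) h3
    simp at this
  unfold dd
  rw [← map_sub, hdiff, map_mul, mul_div_cancel_left₀ _ hne, c2, c3]
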